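/- If H is a graph containing an odd cycle, then t(H, BIP_{0,1}) = 0, where BIP_{0,1}(x,y) equals 0 on [0,1/2]²∪(1/2,1]² and 1 elsewhere. Consequently, for the graphon W = BIP_{0,1}, E[h(W)] = h(0)/2 + h(1)/2 = 1/2, and thus the constant graphon r does not minimize LT(H, r) whenever h(r) > 1/2, in particular for all r < 0.186. -/

import Mathlib

open MeasureTheory Real

noncomputable section

def I01 : Set ℝ := Set.Icc 0 1

/-- The bipartite-structured graphon: `a` on `[0,1/2]² ∪ (1/2,1]²` and `b` elsewhere. -/
def BIP (a b : ℝ) (x y : ℝ) : ℝ := if (x ≤ 1 / 2 ↔ y ≤ 1 / 2) then a else b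

lemma BIP_symm (a b : ℝ) : ∀ x y : ℝ, BIP a b x y = BIP a b y x := by
  intro x y
  simp only [BIP, iff_comm]

/-- The `H`-density `t(H, W)` of a symmetric kernel `W`, integrating over `[0,1]^{V(H)}`. -/
def tH {V : Type*} [Fintype V] [DecidableEq V] (H : SimpleGraph V) [DecidableRel H.Adj]
    (W : ℝ → ℝ → ℝ) (hW : ∀ x y, W x y = W y x) : ℝ :=
  ∫ x : V → ℝ,
      (∏ e ∈ H.edgeFinset,
        Sym2.lift ⟨fun i j => W (x i) (x j), fun i j => hW (x i) (x j)⟩ e)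
    ∂(Measure.pi fun _ => volume.restrict I01)

/-- The function `h(x) = x log x - x + 1` (with `h(0) = 1` since `Real.log 0 = 0`). -/
def hfun (x : ℝ) : ℝ := x * Real.log x - x + 1

lemma aux_intA : (∫ y in I01, (if y ≤ 1/2 then (1:ℝ) else 0)) = 1/2 := by
  have heq : (fun y : ℝ => if y ≤ 1/2 then (1:ℝ) else 0)
      = Set.indicator (Set.Iic (1/2 : ℝ)) (fun _ => 1) := by
    funext y; simp [Set.indicator_apply]
  rw [heq, MeasureTheory.integral_indicator measurableSet_Iic, setIntegral_const,
    measureReal_restrict_apply measurableSet_Iic]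
  have hs : Set.Iic (1/2 : ℝ) ∩ I01 = Set.Icc 0 (1/2) := by
    ext y
    simp only [Set.mem_inter_iff, Set.mem_Iic, Set.mem_Icc, I01]
    constructor
    · rintro ⟨h1, h2, _⟩; exact ⟨h2, h1⟩
    · rintro ⟨h1, h2⟩; exact ⟨h2, h1, by linarith⟩
  rw [hs, Real.volume_real_Icc]
  norm_num

lemma aux_intB : (∫ y in I01, (if y ≤ 1/2 then (0:ℝ) else 1)) = 1/2 := by
  have heq : (fun y : ℝ => if y ≤ 1/2 then (0:ℝ) else 1)
      = Set.indicator (Set.Ioi (1/2 : ℝ)) (fun _ => 1) := by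
    funext y
    by_cases hy : y ≤ 1/2
    · rw [if_pos hy, Set.indicator_of_notMem (by simpa using hy)]
    · rw [if_neg hy, Set.indicator_of_mem (Set.mem_Ioi.2 (lt_of_not_ge hy))]
  rw [heq, MeasureTheory.integral_indicator measurableSet_Ioi, setIntegral_const,
    measureReal_restrict_apply measurableSet_Ioi]
  have hs : Set.Ioi (1/2 : ℝ) ∩ I01 = Set.Ioc (1/2) 1 := by
    ext y
    simp only [Set.mem_inter_iff, Set.mem_Ioi, Set.mem_Icc, Set.mem_Ioc, I01]
    constructor
    · rintro ⟨h1, _, h3⟩; exact ⟨h1, h3⟩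
    · rintro ⟨h1, h2⟩; exact ⟨h1, by linarith, h2⟩
  rw [hs, Real.volume_real_Ioc]
  norm_num

lemma aux_inner (x : ℝ) : (∫ y in I01, hfun (BIP 0 1 x y)) = 1/2 := by
  by_cases hx : x ≤ 1/2
  · have h : ∀ y : ℝ, hfun (BIP 0 1 x y) = if y ≤ 1/2 then 1 else 0 := by
      intro y
      simp only [BIP]
      by_cases hy : y ≤ 1/2
      · rw [if_pos (iff_of_true hx hy), if_pos hy]; simp [hfun]
      · rw [if_neg (fun hiff => hy (hiff.mp hx)), if_neg hy]; simp [hfun]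
    simp only [h]
    exact aux_intA
  · have h : ∀ y : ℝ, hfun (BIP 0 1 x y) = if y ≤ 1/2 then 0 else 1 := by
      intro y
      simp only [BIP]
      by_cases hy : y ≤ 1/2
      · rw [if_neg (fun hiff => hx (hiff.mpr hy)), if_pos hy]; simp [hfun]
      · rw [if_pos (iff_of_false hx hy), if_neg hy]; simp [hfun]
    simp only [h]
    exact aux_intB

lemma aux_hfun_gt (r : ℝ) (hr : 0 < r) (hr' : r < 0.186) : hfun r > 1/2 := by
  have hexp : (500:ℝ)/93 ≤ Real.exp (157/93) := by
    have h := Real.sum_le_exp_of_nonneg (x := 157/93) (by norm_num) 7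
    refine le_trans ?_ h
    simp [Finset.sum_range_succ, Nat.factorial]
    norm_num
  have hlog : Real.log 0.186 ≥ -(157/93) := by
    rw [ge_iff_le, Real.le_log_iff_exp_le (by norm_num : (0:ℝ) < 0.186)]
    rw [Real.exp_neg]
    rw [inv_le_comm₀ (Real.exp_pos _) (by norm_num)]
    calc (0.186:ℝ)⁻¹ = 500/93 := by norm_num
      _ ≤ Real.exp (157/93) := hexp
  have h1 : Real.log (0.186 / r) ≤ 0.186 / r - 1 :=
    Real.log_le_sub_one_of_pos (by positivity)
  have h2 : Real.log (0.186 / r) = Real.log 0.186 - Real.log r :=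
    Real.log_div (by norm_num) (ne_of_gt hr)
  have h3 : Real.log r ≥ Real.log 0.186 - (0.186 / r - 1) := by
    rw [h2] at h1; linarith
  have h4 : r * Real.log r ≥ r * Real.log 0.186 - 0.186 + r := by
    have := mul_le_mul_of_nonneg_left h3 hr.le
    have hrr : r * (0.186 / r) = 0.186 := by field_simp
    nlinarith [mul_le_mul_of_nonneg_left h3 hr.le]
  have h5 : r * Real.log 0.186 ≥ r * (-(157/93)) :=
    mul_le_mul_of_nonneg_left hlog hr.le
  unfold hfun
  nlinarith

lemma aux_prod_zero {V : Type*} [Fintype V] [DecidableEq V]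
    (H : SimpleGraph V) [DecidableRel H.Adj] (hodd : ¬ H.Colorable 2) (x : V → ℝ) :
    (∏ e ∈ H.edgeFinset,
        Sym2.lift ⟨fun i j => BIP 0 1 (x i) (x j),
          fun i j => BIP_symm 0 1 (x i) (x j)⟩ e) = 0 := by
  by_contra hne
  apply hodd
  refine ⟨SimpleGraph.Coloring.mk (fun v => if x v ≤ 1/2 then 0 else 1) ?_⟩
  intro v w hvw
  have hmem : s(v, w) ∈ H.edgeFinset := by
    rw [SimpleGraph.mem_edgeFinset, SimpleGraph.mem_edgeSet]; exact hvw
  have hfac := Finset.prod_ne_zero_iff.mp hne _ hmem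
  rw [Sym2.lift_mk] at hfac
  simp only [BIP] at hfac
  have hniff : ¬ (x v ≤ 1/2 ↔ x w ≤ 1/2) := by
    intro hiff; rw [if_pos hiff] at hfac; exact hfac rfl
  by_cases hv : x v ≤ 1/2 <;> by_cases hw : x w ≤ 1/2
  · exact absurd (iff_of_true hv hw) hniff
  · simp only [if_pos hv, if_neg hw]; decide
  · simp only [if_neg hv, if_pos hw]; decide
  · exact absurd (iff_of_false hv hw) hniff

theorem stmt_17 {V : Type*} [Fintype V] [DecidableEq V]
    (H : SimpleGraph V) [DecidableRel H.Adj]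
    (hodd : ¬ H.Colorable 2) :
    tH H (BIP 0 1) (BIP_symm 0 1) = 0 ∧
      (∫ x in I01, ∫ y in I01, hfun (BIP 0 1 x y)) = 1 / 2 ∧
      (∀ r : ℝ, 0 ≤ r → hfun r > 1 / 2 →
        (∫ x in I01, ∫ y in I01, hfun (BIP 0 1 x y)) < hfun r ∧
          tH H (BIP 0 1) (BIP_symm 0 1) ≤ r ^ H.edgeFinset.card) ∧
      (∀ r : ℝ, 0 < r → r < 0.186 →
        (∫ x in I01, ∫ y in I01, hfun (BIP 0 1 x y)) < hfun r ∧
          tH H (BIP 0 1) (BIP_symm 0 1) ≤ r ^ H.edgeFinset.card) := by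
  have ht : tH H (BIP 0 1) (BIP_symm 0 1) = 0 := by
    unfold tH
    simp only [aux_prod_zero H hodd]
    exact integral_zero _ _
  have hint : (∫ x in I01, ∫ y in I01, hfun (BIP 0 1 x y)) = 1 / 2 := by
    simp only [aux_inner]
    rw [setIntegral_const]
    simp [I01, Real.volume_Icc]
  refine ⟨ht, hint, ?_, ?_⟩
  · intro r hr hhr
    exact ⟨by rw [hint]; exact hhr, by rw [ht]; exact pow_nonneg hr _⟩
  · intro r hr hr'
    have := aux_hfun_gt r hr hr'
    exact ⟨by rw [hint]; exact this, by rw [ht]; exact pow_nonneg hr.le _⟩
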